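/- arXiv:math/0203072 — 2 statements merged into one kernel-verified Lean document; each statement's English description precedes it below -/
import Mathlib

section
/- Let $\mu_1,\ldots,\mu_n$ be shift-invariant measures on a subshift $X$ all projecting under a 1-block factor map $\pi$ to the same measure $\nu$ on a subshift $Y$, and let $\hat\mu = \mu_1 \otimes_\nu \cdots \otimes_\nu \mu_n$ be their relatively independent joining on $X^n$. Suppose $b$ is a symbol of $Y$ with $\nu[b] > 0$ whose preimage consists of $N < n$ symbols of $X$. Then there exist indices $i \neq j$ such that $\hat\mu\{\hat{x} \in X^n : (p_i\hat{x})_0 = (p_j\hat{x})_0\} > 0$, and consequently $(\mu_i \otimes_\nu \mu_j)\{(u,v) : u_0 = v_0\} > 0$. -/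
open MeasureTheory

noncomputable section

def shift {A : Type*} : (ℤ → A) → (ℤ → A) := fun x n => x (n + 1)

theorem stmt9 {A B : Type*} [Fintype A] [Fintype B]
    [MeasurableSpace A] [MeasurableSingletonClass A]
    [MeasurableSpace B] [MeasurableSingletonClass B]
    (X : Set (ℤ → A)) (hX : shift '' X = X)  -- the subshift X
    (φ : A → B)
    (n : ℕ) (μ : Fin n → Measure (ℤ → A)) [∀ i, IsProbabilityMeasure (μ i)]
    (hinv : ∀ i, MeasurePreserving shift (μ i) (μ i))
    (hsupp : ∀ i, (μ i) Xᶜ = 0)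
    (ν : Measure (ℤ → B)) [IsProbabilityMeasure ν]
    (hproj : ∀ i, (μ i).map (fun x => φ ∘ x) = ν)
    -- μhat is the relatively independent joining μ1 ⊗_ν ⋯ ⊗_ν μn on X^n:
    (μhat : Measure (Fin n → (ℤ → A))) [IsProbabilityMeasure μhat]
    (hjoin : ∀ As : Fin n → Set (ℤ → A), (∀ i, MeasurableSet (As i)) →
      ∀ g : Fin n → ((ℤ → B) → ℝ), (∀ i, Measurable (g i)) →
        (∀ i, (fun x => g i (φ ∘ x)) =ᵐ[μ i]
          (μ i)[(As i).indicator (fun _ => (1 : ℝ))|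
            MeasurableSpace.comap (fun x : ℤ → A => φ ∘ x) inferInstance]) →
        μhat (Set.univ.pi As) = ENNReal.ofReal (∫ y, ∏ i, g i y ∂ν))
    (b : B) (hb : ν {y | y 0 = b} ≠ 0)
    (hN : Nat.card {a : A // φ a = b} < n) :
    ∃ i j : Fin n, i ≠ j ∧
      0 < μhat {xhat : Fin n → (ℤ → A) | xhat i 0 = xhat j 0} ∧
      0 < (μhat.map (fun xhat : Fin n → (ℤ → A) => (xhat i, xhat j)))
          {p : (ℤ → A) × (ℤ → A) | p.1 0 = p.2 0} := by
  classical
  have hn : 0 < n := lt_of_le_of_lt (Nat.zero_le _) hN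
  haveI : NeZero n := ⟨hn.ne'⟩
  -- the target set in Y
  set S : Set (ℤ → B) := {y | y 0 = b} with hSdef
  have hS : MeasurableSet S := by
    have : S = (fun y : ℤ → B => y 0) ⁻¹' {b} := rfl
    rw [this]; exact (measurable_pi_apply 0) (measurableSet_singleton b)
  have hφx : Measurable (fun x : ℤ → A => φ ∘ x) :=
    measurable_pi_lambda _ (fun i => (measurable_of_countable φ).comp (measurable_pi_apply i))
  set As : Fin n → Set (ℤ → A) := fun _ => (fun x : ℤ → A => φ ∘ x) ⁻¹' S with hAsdef
  have hAs : ∀ i, MeasurableSet (As i) := fun i => hφx hS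
  set g : Fin n → ((ℤ → B) → ℝ) := fun _ => S.indicator (fun _ => (1 : ℝ)) with hgdef
  have hg : ∀ i, Measurable (g i) := fun i => (measurable_const.indicator hS)
  have hcomap_le : MeasurableSpace.comap (fun x : ℤ → A => φ ∘ x) inferInstance ≤
      (inferInstance : MeasurableSpace (ℤ → A)) := hφx.comap_le
  have hce : ∀ i, (fun x => g i (φ ∘ x)) =ᵐ[μ i]
      (μ i)[(As i).indicator (fun _ => (1 : ℝ))|
        MeasurableSpace.comap (fun x : ℤ → A => φ ∘ x) inferInstance] := by
    intro i
    have hsm : StronglyMeasurable[MeasurableSpace.comap (fun x : ℤ → A => φ ∘ x) inferInstance]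
        ((As i).indicator (fun _ => (1 : ℝ))) := by
      refine StronglyMeasurable.indicator stronglyMeasurable_const ?_
      exact ⟨S, hS, rfl⟩
    have hint : Integrable ((As i).indicator (fun _ => (1 : ℝ))) (μ i) :=
      (integrable_const (1 : ℝ)).indicator (hAs i)
    have := condExp_of_stronglyMeasurable hcomap_le hsm hint
    rw [this]
    refine Filter.EventuallyEq.of_eq ?_
    funext x
    by_cases hx : x ∈ As i
    · simp [g, Set.indicator_of_mem, hx, Set.indicator_of_mem (show φ ∘ x ∈ S from hx)]
    · simp [g, Set.indicator_of_notMem, hx, Set.indicator_of_notMem (show φ ∘ x ∉ S from hx)]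
  have hkey := hjoin As hAs g hg hce
  have hprod : ∀ y, (∏ i, g i y) = S.indicator (fun _ => (1 : ℝ)) y := by
    intro y
    by_cases hy : y ∈ S
    · simp [g, Set.indicator_of_mem hy]
    · simp [g, Set.indicator_of_notMem hy, Finset.prod_eq_zero (Finset.mem_univ (0 : Fin n))]
  have hint : (∫ y, ∏ i, g i y ∂ν) = (ν S).toReal := by
    simp_rw [hprod]
    exact integral_indicator_one hS
  rw [hint, ENNReal.ofReal_toReal (measure_ne_top ν S)] at hkey
  have hpos : μhat (Set.univ.pi As) ≠ 0 := by rw [hkey]; exact hb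
  -- pigeonhole: cover the cylinder by pair-coincidence sets
  have hcover : Set.univ.pi As ⊆
      ⋃ (p : Fin n × Fin n) (_ : p.1 ≠ p.2), {xhat : Fin n → (ℤ → A) | xhat p.1 0 = xhat p.2 0} := by
    intro xhat hx
    have hmem : ∀ i, φ (xhat i 0) = b := by
      intro i
      have := hx i (Set.mem_univ i)
      exact this
    have hcard : Fintype.card {a : A // φ a = b} < Fintype.card (Fin n) := by
      rwa [Fintype.card_fin, ← Nat.card_eq_fintype_card]
    obtain ⟨i, j, hij, hfeq⟩ := Fintype.exists_ne_map_eq_of_card_lt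
      (fun i : Fin n => (⟨xhat i 0, hmem i⟩ : {a : A // φ a = b})) hcard
    refine Set.mem_iUnion.2 ⟨(i, j), Set.mem_iUnion.2 ⟨hij, ?_⟩⟩
    exact Subtype.ext_iff.1 hfeq
  have hexists : ∃ p : Fin n × Fin n, p.1 ≠ p.2 ∧
      μhat {xhat : Fin n → (ℤ → A) | xhat p.1 0 = xhat p.2 0} ≠ 0 := by
    by_contra h
    push_neg at h
    have : μhat (⋃ (p : Fin n × Fin n) (_ : p.1 ≠ p.2),
        {xhat : Fin n → (ℤ → A) | xhat p.1 0 = xhat p.2 0}) = 0 := by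
      refine measure_iUnion_null fun p => ?_
      by_cases hp : p.1 ≠ p.2
      · exact le_antisymm ((measure_mono (Set.iUnion_subset fun _ => subset_rfl)).trans
          (h p hp).le) zero_le
      · simp [hp]
    exact hpos (measure_mono_null hcover this)
  obtain ⟨⟨i, j⟩, hij, hμij⟩ := hexists
  refine ⟨i, j, hij, hμij.bot_lt, ?_⟩
  have hmap : Measurable (fun xhat : Fin n → (ℤ → A) => (xhat i, xhat j)) :=
    (measurable_pi_apply i).prodMk (measurable_pi_apply j)
  have hsetm : MeasurableSet {p : (ℤ → A) × (ℤ → A) | p.1 0 = p.2 0} := by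
    exact measurableSet_eq_fun
      (measurable_fst.eval (a := (0:ℤ))) (measurable_snd.eval (a := (0:ℤ)))
  rw [Measure.map_apply hmap hsetm]
  exact hμij.bot_lt
end
end

section
/- Let $\pi: X \to Y$ be a 1-block factor map between subshifts on finite alphabets, and let $f_n(y) = \log|\pi^{-1}[y_0\cdots y_{n-1}]|$ count preimage $n$-blocks. Then for every shift-invariant measure $\mu$ on $X$ with $\pi_*\mu = \nu$ ergodic, the entropies satisfy $h(\mu) \leq h(\nu) + \lim_{n\to\infty}\frac{1}{n}\int_Y f_n \, d\nu$. -/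
open MeasureTheory Filter

noncomputable section

def preimageBlocks {A B : Type*} (φ : A → B) (X : Set (ℤ → A)) (n : ℕ) (y : ℤ → B) :
    Set (Fin n → A) :=
  {w | (∃ x ∈ X, ∀ i : Fin n, x (i : ℤ) = w i) ∧ ∀ i : Fin n, φ (w i) = y (i : ℤ)}

def fCount {A B : Type*} (φ : A → B) (X : Set (ℤ → A)) (n : ℕ) (y : ℤ → B) : ℝ :=
  Real.log ((preimageBlocks φ X n y).ncard)

def blockEntropy {A : Type*} [Fintype A] [MeasurableSpace A]
    (μ : Measure (ℤ → A)) (n : ℕ) : ℝ :=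
  ∑ w : Fin n → A, Real.negMulLog (μ {x | ∀ i : Fin n, x (i : ℤ) = w i}).toReal

def KSEntropy {A : Type*} [Fintype A] [MeasurableSpace A]
    (μ : Measure (ℤ → A)) : ℝ :=
  ⨅ n : ℕ, blockEntropy μ (n + 1) / (n + 1)

namespace Stmt17Aux

open Finset

lemma meas_preimage_finset {Ω V : Type*} [MeasurableSpace Ω] [MeasurableSpace V]
    [MeasurableSingletonClass V] (κ : Measure Ω) {R : Ω → V} (hR : Measurable R)
    (t : Finset V) : κ (R ⁻¹' ↑t) = ∑ v ∈ t, κ (R ⁻¹' {v}) := by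
  have h1 : R ⁻¹' ↑t = ⋃ v ∈ t, R ⁻¹' {v} := by ext x; simp
  rw [h1, measure_biUnion_finset ?_ (fun v _ => hR (measurableSet_singleton v))]
  intro u _ v _ huv
  exact Disjoint.preimage R (by simpa using huv)

lemma meas_eq_sum_inter_fiber {Ω V : Type*} [MeasurableSpace Ω] [MeasurableSpace V]
    [MeasurableSingletonClass V] [Fintype V] (κ : Measure Ω) {R : Ω → V}
    (hR : Measurable R) {S : Set Ω} (hS : MeasurableSet S) :
    κ S = ∑ v : V, κ (S ∩ R ⁻¹' {v}) := by
  have h1 : S = ⋃ v ∈ (Finset.univ : Finset V), S ∩ R ⁻¹' {v} := by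
    ext x; simp
  have h2 : κ (⋃ v ∈ (Finset.univ : Finset V), S ∩ R ⁻¹' {v})
      = ∑ v : V, κ (S ∩ R ⁻¹' {v}) := by
    refine measure_biUnion_finset ?_ (fun v _ => hS.inter (hR (measurableSet_singleton v)))
    intro u _ v _ huv
    exact Disjoint.mono Set.inter_subset_right Set.inter_subset_right
      (Disjoint.preimage R (Set.disjoint_singleton.mpr huv))
  rw [← h2, ← h1]

lemma cyl_eq_preimage {A : Type*} (n : ℕ) (t : Fin n → ℤ) (w : Fin n → A) :
    {x : ℤ → A | ∀ i : Fin n, x (t i) = w i} = (fun y i => y (t i)) ⁻¹' {w} := by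
  ext x; simp [funext_iff]

lemma measurable_restr {A : Type*} [MeasurableSpace A] (n : ℕ) (t : Fin n → ℤ) :
    Measurable (fun (y : ℤ → A) (i : Fin n) => y (t i)) :=
  measurable_pi_iff.2 fun i => measurable_pi_apply (t i)

/-- Gibbs-type inequality. -/
lemma gibbs {ι : Type*} (s : Finset ι) (p r : ι → ℝ)
    (hp : ∀ i ∈ s, 0 ≤ p i) (hr : ∀ i ∈ s, 0 ≤ r i)
    (hpr : ∀ i ∈ s, 0 < p i → 0 < r i) :
    ∑ i ∈ s, Real.negMulLog (p i) ≤
      (∑ i ∈ s, r i - ∑ i ∈ s, p i) - ∑ i ∈ s, p i * Real.log (r i) := by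
  rw [← Finset.sum_sub_distrib, ← Finset.sum_sub_distrib]
  refine Finset.sum_le_sum fun i hi => ?_
  rcases eq_or_lt_of_le (hp i hi) with h0 | h0
  · simp [← h0, hr i hi]
  · have hri := hpr i hi h0
    have h1 : Real.log (r i / p i) ≤ r i / p i - 1 :=
      Real.log_le_sub_one_of_pos (div_pos hri h0)
    have h2 : Real.log (r i / p i) = Real.log (r i) - Real.log (p i) :=
      Real.log_div hri.ne' h0.ne'
    have h4 := mul_le_mul_of_nonneg_left h1 h0.le
    rw [h2] at h4
    have h3 : p i * (r i / p i - 1) = r i - p i := by field_simp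
    rw [h3] at h4
    simp only [Real.negMulLog]
    nlinarith

/-- Grouping: entropy of a family bounded by entropy of the sum plus log of the
number of positive entries. -/
lemma sum_negMulLog_le {ι : Type*} (s : Finset ι) (p : ι → ℝ)
    (hp : ∀ i ∈ s, 0 ≤ p i) (K : ℕ)
    (hK : ∀ t : Finset ι, t ⊆ s → (∀ i ∈ t, 0 < p i) → t.card ≤ K) :
    ∑ i ∈ s, Real.negMulLog (p i) ≤
      Real.negMulLog (∑ i ∈ s, p i) + (∑ i ∈ s, p i) * Real.log K := by
  classical
  set t := s.filter fun i => 0 < p i with ht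
  have hsub : t ⊆ s := Finset.filter_subset _ _
  have hzero : ∀ i ∈ s, i ∉ t → p i = 0 := by
    intro i hi hit
    rcases eq_or_lt_of_le (hp i hi) with h | h
    · exact h.symm
    · exact absurd (Finset.mem_filter.2 ⟨hi, h⟩) hit
  have hsum : ∑ i ∈ s, p i = ∑ i ∈ t, p i :=
    (Finset.sum_subset hsub (fun i hi hit => hzero i hi hit)).symm
  have hNsum : ∑ i ∈ s, Real.negMulLog (p i) = ∑ i ∈ t, Real.negMulLog (p i) :=
    (Finset.sum_subset hsub (fun i hi hit => by
      rw [hzero i hi hit, Real.negMulLog_zero])).symm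
  rcases eq_or_lt_of_le (Finset.sum_nonneg fun i hi => hp i hi) with hS0 | hS0
  · -- total mass zero
    have hz : ∀ i ∈ s, p i = 0 :=
      (Finset.sum_eq_zero_iff_of_nonneg hp).1 hS0.symm
    have : ∑ i ∈ s, Real.negMulLog (p i) = 0 :=
      Finset.sum_eq_zero fun i hi => by rw [hz i hi, Real.negMulLog_zero]
    rw [this, ← hS0]
    simp
  · -- positive total mass
    set S := ∑ i ∈ s, p i with hSdef
    have htne : t.Nonempty := by
      by_contra h
      rw [Finset.not_nonempty_iff_eq_empty] at h
      rw [hsum, h, Finset.sum_empty] at hS0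
      exact lt_irrefl _ hS0
    have hk1 : 1 ≤ t.card := Finset.card_pos.2 htne
    have hkK : t.card ≤ K := hK t hsub fun i hi => (Finset.mem_filter.1 hi).2
    have hK1 : (1 : ℝ) ≤ (t.card : ℝ) := by exact_mod_cast hk1
    have hkpos : (0 : ℝ) < t.card := by linarith
    have hSk : (0 : ℝ) < S / t.card := div_pos hS0 hkpos
    have hg := gibbs t p (fun _ => S / t.card) (fun i hi => hp i (hsub hi))
      (fun i _ => hSk.le) (fun i _ _ => hSk)
    have hconst : ∑ _i ∈ t, S / (t.card : ℝ) = S := by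
      rw [Finset.sum_const, nsmul_eq_mul]
      field_simp
    have hlog : Real.log (S / t.card) = Real.log S - Real.log t.card :=
      Real.log_div hS0.ne' hkpos.ne'
    have hplog : ∑ i ∈ t, p i * Real.log (S / t.card)
        = S * (Real.log S - Real.log t.card) := by
      rw [← Finset.sum_mul, ← hsum, hlog]
    rw [hNsum]
    have hlogK : Real.log (t.card : ℝ) ≤ Real.log (K : ℝ) :=
      Real.log_le_log hkpos (by exact_mod_cast hkK)
    calc ∑ i ∈ t, Real.negMulLog (p i)
        ≤ (∑ i ∈ t, S / (t.card : ℝ) - ∑ i ∈ t, p i) - ∑ i ∈ t, p i * Real.log (S / t.card) := hg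
      _ = - (S * Real.log S) + S * Real.log t.card := by
          rw [hconst, ← hsum, hplog]; ring
      _ ≤ Real.negMulLog S + S * Real.log K := by
          have := mul_le_mul_of_nonneg_left hlogK hS0.le
          simp only [Real.negMulLog]
          nlinarith


/-- extension of a finite word to a bi-infinite sequence -/
def ext {B : Type*} [h : Nonempty B] (n : ℕ) (v : Fin n → B) : ℤ → B :=
  fun j => if h' : 0 ≤ j ∧ j < n then v ⟨j.toNat, by omega⟩ else Classical.arbitrary B

lemma ext_coe {B : Type*} [Nonempty B] (n : ℕ) (v : Fin n → B) (i : Fin n) :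
    ext n v (i : ℤ) = v i := by
  have h' : (0 : ℤ) ≤ (i : ℤ) ∧ (i : ℤ) < n := by
    constructor
    · positivity
    · exact_mod_cast i.isLt
  rw [ext, dif_pos h']
  congr 1

lemma key_ineq {A B : Type*} [Fintype A] [Fintype B]
    [MeasurableSpace A] [MeasurableSingletonClass A]
    [MeasurableSpace B] [MeasurableSingletonClass B] [Nonempty B]
    (φ : A → B) (X : Set (ℤ → A))
    (μ : Measure (ℤ → A)) [IsProbabilityMeasure μ] (hμsupp : μ Xᶜ = 0)
    (ν : Measure (ℤ → B)) (hproj : μ.map (fun x => φ ∘ x) = ν)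
    (n : ℕ) :
    blockEntropy μ n ≤ blockEntropy ν n + ∫ y, fCount φ X n y ∂ν := by
  classical
  have hφ : Measurable (fun x : ℤ → A => φ ∘ x) :=
    measurable_pi_iff.2 fun i => Measurable.of_discrete.comp (measurable_pi_apply i)
  set Ra : (ℤ → A) → (Fin n → A) := fun y i => y (i : ℤ) with hRa
  set Rb : (ℤ → B) → (Fin n → B) := fun y i => y (i : ℤ) with hRb
  have hRam : Measurable Ra := measurable_restr n _
  have hRbm : Measurable Rb := measurable_restr n _
  set ψ : (Fin n → A) → (Fin n → B) := fun w i => φ (w i) with hψ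
  set p : (Fin n → A) → ℝ := fun w => (μ (Ra ⁻¹' {w})).toReal with hp
  set s : (Fin n → B) → ℝ := fun v => (ν (Rb ⁻¹' {v})).toReal with hs
  have hppos : ∀ w, 0 ≤ p w := fun w => ENNReal.toReal_nonneg
  -- marginal: s v = ∑ over fiber of p
  have hmarg : ∀ v : (Fin n → B), s v = ∑ w ∈ univ.filter (fun w => ψ w = v), p w := by
    intro v
    have h1 : ν (Rb ⁻¹' {v}) = μ ((fun x => φ ∘ x) ⁻¹' (Rb ⁻¹' {v})) := by
      rw [← hproj, Measure.map_apply hφ (hRbm (measurableSet_singleton v))]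
    have h2 : (fun x : ℤ → A => φ ∘ x) ⁻¹' (Rb ⁻¹' {v})
        = Ra ⁻¹' (↑(univ.filter (fun w => ψ w = v)) : Set (Fin n → A)) := by
      ext x
      simp only [Set.mem_preimage, Set.mem_singleton_iff, Finset.coe_filter,
        Set.mem_setOf_eq, Finset.mem_univ, true_and, funext_iff]
      rfl
    show (ν (Rb ⁻¹' {v})).toReal = _
    rw [h1, h2, meas_preimage_finset μ hRam]
    exact ENNReal.toReal_sum fun w _ => measure_ne_top μ _
  -- the integral of fCount as a finite sum
  set G : (Fin n → B) → ℝ := fun v => Real.log ((preimageBlocks φ X n (ext n v)).ncard) with hG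
  have hfG : ∀ y, fCount φ X n y = G (Rb y) := by
    intro y
    have hset : preimageBlocks φ X n y = preimageBlocks φ X n (ext n (Rb y)) := by
      unfold preimageBlocks
      ext w
      simp only [Set.mem_setOf_eq]
      constructor
      · rintro ⟨h1, h2⟩
        exact ⟨h1, fun i => by rw [h2 i, ext_coe]⟩
      · rintro ⟨h1, h2⟩
        exact ⟨h1, fun i => by rw [h2 i, ext_coe]⟩
    rw [fCount, hset]
  haveI : IsProbabilityMeasure ν := by
    rw [← hproj]; exact Measure.isProbabilityMeasure_map hφ.aemeasurable
  have hint : ∫ y, fCount φ X n y ∂ν = ∑ v : Fin n → B, s v * G v := by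
    have h1 : ∫ y, fCount φ X n y ∂ν = ∫ y, G (Rb y) ∂ν := by
      simp_rw [hfG]
    rw [h1, ← integral_map hRbm.aemeasurable (Measurable.of_discrete (f := G)).aestronglyMeasurable]
    haveI : IsProbabilityMeasure (ν.map Rb) := Measure.isProbabilityMeasure_map hRbm.aemeasurable
    rw [integral_fintype (Integrable.of_finite)]
    refine Finset.sum_congr rfl fun v _ => ?_
    rw [Measure.real, Measure.map_apply hRbm (measurableSet_singleton v), smul_eq_mul, hs]
  -- blockEntropy identifications
  have hBEμ : blockEntropy μ n = ∑ w : Fin n → A, Real.negMulLog (p w) := by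
    unfold blockEntropy
    refine Finset.sum_congr rfl fun w _ => ?_
    rw [hp, cyl_eq_preimage]
  have hBEν : blockEntropy ν n = ∑ v : Fin n → B, Real.negMulLog (s v) := by
    unfold blockEntropy
    refine Finset.sum_congr rfl fun v _ => ?_
    rw [hs, cyl_eq_preimage]
  -- per-fiber inequality
  have hfiber : ∀ v : Fin n → B,
      ∑ w ∈ univ.filter (fun w => ψ w = v), Real.negMulLog (p w)
        ≤ Real.negMulLog (s v) + s v * G v := by
    intro v
    have hKcard : ∀ t : Finset (Fin n → A), t ⊆ univ.filter (fun w => ψ w = v) →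
        (∀ w ∈ t, 0 < p w) → t.card ≤ (preimageBlocks φ X n (ext n v)).ncard := by
      intro t hts hpos
      rw [← Set.ncard_coe_finset]
      refine Set.ncard_le_ncard ?_ (Set.toFinite _)
      intro w hw
      rw [Finset.mem_coe] at hw
      have hψw : ψ w = v := (Finset.mem_filter.1 (hts hw)).2
      have hwpos : 0 < p w := hpos w hw
      have hμw : μ (Ra ⁻¹' {w}) ≠ 0 := by
        intro h0
        rw [hp] at hwpos
        simp only [h0, ENNReal.toReal_zero] at hwpos
        exact lt_irrefl _ hwpos
      have hint0 : μ (Ra ⁻¹' {w} ∩ X) ≠ 0 := by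
        rw [measure_inter_conull hμsupp]
        exact hμw
      obtain ⟨x, hx1, hx2⟩ := nonempty_of_measure_ne_zero hint0
      refine ⟨⟨x, hx2, fun i => congrFun hx1 i⟩, fun i => ?_⟩
      rw [ext_coe]
      exact congrFun hψw i
    calc ∑ w ∈ univ.filter (fun w => ψ w = v), Real.negMulLog (p w)
        ≤ Real.negMulLog (∑ w ∈ univ.filter (fun w => ψ w = v), p w)
          + (∑ w ∈ univ.filter (fun w => ψ w = v), p w)
            * Real.log ((preimageBlocks φ X n (ext n v)).ncard) :=
          sum_negMulLog_le _ _ (fun w _ => hppos w) _ hKcard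
      _ = Real.negMulLog (s v) + s v * G v := by rw [← hmarg, hG]
  -- assemble
  calc blockEntropy μ n
      = ∑ v : Fin n → B, ∑ w ∈ univ.filter (fun w => ψ w = v), Real.negMulLog (p w) := by
        rw [hBEμ, Finset.sum_fiberwise_of_maps_to (fun w _ => Finset.mem_univ (ψ w))]
    _ ≤ ∑ v : Fin n → B, (Real.negMulLog (s v) + s v * G v) :=
        Finset.sum_le_sum fun v _ => hfiber v
    _ = blockEntropy ν n + ∫ y, fCount φ X n y ∂ν := by
        rw [Finset.sum_add_distrib, hBEν, hint]


lemma shift_iterate {B : Type*} (k : ℕ) (y : ℤ → B) (j : ℤ) :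
    (shift^[k] y) j = y (j + k) := by
  induction k generalizing y j with
  | zero => simp
  | succ k ih =>
    rw [Function.iterate_succ, Function.comp_apply, ih]
    show y (j + k + 1) = _
    congr 1
    push_cast
    ring

lemma blockEntropy_subadd {B : Type*} [Fintype B] [MeasurableSpace B]
    [MeasurableSingletonClass B]
    (ν : Measure (ℤ → B)) [IsProbabilityMeasure ν] (hν : MeasurePreserving shift ν ν)
    (m n : ℕ) : blockEntropy ν (m + n) ≤ blockEntropy ν m + blockEntropy ν n := by
  classical
  set R1 : (ℤ → B) → (Fin m → B) := fun y i => y (i : ℤ) with hR1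
  set R2 : (ℤ → B) → (Fin n → B) := fun y j => y ((j : ℤ) + m) with hR2
  set R0 : (ℤ → B) → (Fin n → B) := fun y j => y (j : ℤ) with hR0
  set R12 : (ℤ → B) → (Fin (m + n) → B) := fun y i => y (i : ℤ) with hR12
  have hR1m : Measurable R1 := measurable_restr m _
  have hR2m : Measurable R2 := measurable_restr n _
  have hR0m : Measurable R0 := measurable_restr n _
  have hR12m : Measurable R12 := measurable_restr (m + n) _
  set E : ((Fin m → B) × (Fin n → B)) ≃ (Fin (m + n) → B) :=
    (Equiv.sumArrowEquivProdArrow (Fin m) (Fin n) B).symm.trans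
      (Equiv.arrowCongr finSumFinEquiv (Equiv.refl B)) with hE
  have hEsymm : ∀ y, E.symm (R12 y) = (R1 y, R2 y) := by
    intro y
    have h1 : E.symm (R12 y)
        = (fun i => R12 y (Fin.castAdd n i), fun j => R12 y (Fin.natAdd m j)) := by
      simp only [hE, Equiv.sumArrowEquivProdArrow, Equiv.arrowCongr, Equiv.trans_apply,
        Equiv.symm_trans_apply, Equiv.symm_symm, Equiv.coe_fn_mk, Equiv.coe_fn_symm_mk,
        Equiv.refl_symm, Equiv.refl_apply, Prod.mk.injEq]
      constructor
      · funext i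
        simp [finSumFinEquiv_apply_left]
      · funext j
        simp [finSumFinEquiv_apply_right]
    rw [h1, Prod.mk.injEq]
    refine ⟨funext fun i => ?_, funext fun j => ?_⟩
    · show y (((Fin.castAdd n i : Fin (m + n)) : ℕ) : ℤ) = y ((i : ℕ) : ℤ)
      congr 1
    · show y (((Fin.natAdd m j : Fin (m + n)) : ℕ) : ℤ) = y (((j : ℕ) : ℤ) + m)
      congr 1
      simp only [Fin.coe_natAdd]
      push_cast
      ring
  have hsplit : ∀ uv : (Fin m → B) × (Fin n → B),
      R12 ⁻¹' {E uv} = R1 ⁻¹' {uv.1} ∩ R2 ⁻¹' {uv.2} := by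
    intro uv
    ext y
    simp only [Set.mem_preimage, Set.mem_singleton_iff, Set.mem_inter_iff]
    rw [← Equiv.symm_apply_eq, hEsymm y, Prod.ext_iff]
  set p : (Fin m → B) × (Fin n → B) → ℝ :=
    fun uv => (ν (R1 ⁻¹' {uv.1} ∩ R2 ⁻¹' {uv.2})).toReal with hp
  set su : (Fin m → B) → ℝ := fun u => (ν (R1 ⁻¹' {u})).toReal with hsu
  set tv : (Fin n → B) → ℝ := fun v => (ν (R0 ⁻¹' {v})).toReal with htv
  have hpnn : ∀ uv, 0 ≤ p uv := fun _ => ENNReal.toReal_nonneg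
  have hsunn : ∀ u, 0 ≤ su u := fun _ => ENNReal.toReal_nonneg
  have htvnn : ∀ v, 0 ≤ tv v := fun _ => ENNReal.toReal_nonneg
  -- identify blockEntropy (m+n)
  have hBE0 : blockEntropy ν (m + n)
      = ∑ w : Fin (m + n) → B, Real.negMulLog (ν (R12 ⁻¹' {w})).toReal := by
    unfold blockEntropy
    refine Finset.sum_congr rfl fun w _ => ?_
    rw [cyl_eq_preimage]
  have hBE : blockEntropy ν (m + n) = ∑ uv : (Fin m → B) × (Fin n → B),
      Real.negMulLog (p uv) := by
    rw [hBE0]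
    refine (Fintype.sum_equiv E (fun uv => Real.negMulLog (p uv))
      (fun w => Real.negMulLog (ν (R12 ⁻¹' {w})).toReal) fun uv => ?_).symm
    show Real.negMulLog (p uv) = Real.negMulLog ((ν (R12 ⁻¹' {E uv})).toReal)
    rw [hsplit uv]
  -- marginals
  have hmarg1 : ∀ u, su u = ∑ v : Fin n → B, p (u, v) := by
    intro u
    show (ν (R1 ⁻¹' {u})).toReal = _
    rw [meas_eq_sum_inter_fiber ν hR2m (hR1m (measurableSet_singleton u))]
    exact ENNReal.toReal_sum fun v _ => measure_ne_top ν _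
  have hmarg2 : ∀ v, tv v = ∑ u : Fin m → B, p (u, v) := by
    intro v
    have hshift : ν (R0 ⁻¹' {v}) = ν (R2 ⁻¹' {v}) := by
      have hcomp : R2 = R0 ∘ (shift^[m]) := by
        funext y j
        show y ((j : ℤ) + m) = (shift^[m] y) (j : ℤ)
        rw [shift_iterate]
      rw [hcomp, Set.preimage_comp]
      exact ((hν.iterate m).measure_preimage
        (hR0m (measurableSet_singleton v)).nullMeasurableSet).symm
    show (ν (R0 ⁻¹' {v})).toReal = _
    rw [hshift, meas_eq_sum_inter_fiber ν hR1m (hR2m (measurableSet_singleton v))]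
    rw [ENNReal.toReal_sum fun u _ => measure_ne_top ν _]
    refine Finset.sum_congr rfl fun u _ => ?_
    rw [Set.inter_comm]
  -- totals
  have htot1 : ∑ u : Fin m → B, su u = 1 := by
    have h0 : ν Set.univ = ∑ u : Fin m → B, ν (Set.univ ∩ R1 ⁻¹' {u}) :=
      meas_eq_sum_inter_fiber ν hR1m MeasurableSet.univ
    simp only [Set.univ_inter] at h0
    have : (ν Set.univ).toReal = ∑ u : Fin m → B, su u := by
      rw [h0]
      exact ENNReal.toReal_sum fun u _ => measure_ne_top ν _
    rw [← this, measure_univ, ENNReal.toReal_one]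
  have htot2 : ∑ v : Fin n → B, tv v = 1 := by
    have h0 : ν Set.univ = ∑ v : Fin n → B, ν (Set.univ ∩ R0 ⁻¹' {v}) :=
      meas_eq_sum_inter_fiber ν hR0m MeasurableSet.univ
    simp only [Set.univ_inter] at h0
    have : (ν Set.univ).toReal = ∑ v : Fin n → B, tv v := by
      rw [h0]
      exact ENNReal.toReal_sum fun v _ => measure_ne_top ν _
    rw [← this, measure_univ, ENNReal.toReal_one]
  -- pointwise bounds
  have hple1 : ∀ u v, p (u, v) ≤ su u := by
    intro u v
    rw [hmarg1 u]
    exact Finset.single_le_sum (fun v _ => hpnn (u, v)) (Finset.mem_univ v)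
  have hple2 : ∀ u v, p (u, v) ≤ tv v := by
    intro u v
    rw [hmarg2 v]
    exact Finset.single_le_sum (fun u _ => hpnn (u, v)) (Finset.mem_univ u)
  -- Gibbs
  set r : (Fin m → B) × (Fin n → B) → ℝ := fun uv => su uv.1 * tv uv.2 with hr
  have hg := gibbs Finset.univ p r (fun uv _ => hpnn uv)
    (fun uv _ => mul_nonneg (hsunn _) (htvnn _))
    (fun uv _ hpos => mul_pos (lt_of_lt_of_le hpos (hple1 uv.1 uv.2))
      (lt_of_lt_of_le hpos (hple2 uv.1 uv.2)))
  have hsumr : ∑ uv : (Fin m → B) × (Fin n → B), r uv = 1 := by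
    rw [Fintype.sum_prod_type]
    simp only [hr]
    rw [← Finset.sum_mul_sum]
    rw [htot1, htot2, one_mul]
  have hsump : ∑ uv : (Fin m → B) × (Fin n → B), p uv = 1 := by
    rw [Fintype.sum_prod_type]
    have : ∀ u, ∑ v : Fin n → B, p (u, v) = su u := fun u => (hmarg1 u).symm
    simp_rw [this]
    exact htot1
  -- split the log
  have hlogsplit : ∑ uv : (Fin m → B) × (Fin n → B), p uv * Real.log (r uv)
      = (∑ uv : (Fin m → B) × (Fin n → B), p uv * Real.log (su uv.1))
        + ∑ uv : (Fin m → B) × (Fin n → B), p uv * Real.log (tv uv.2) := by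
    rw [← Finset.sum_add_distrib]
    refine Finset.sum_congr rfl fun uv _ => ?_
    rcases eq_or_lt_of_le (hpnn uv) with h0 | h0
    · rw [← h0]; ring
    · have h1 : 0 < su uv.1 := lt_of_lt_of_le h0 (hple1 uv.1 uv.2)
      have h2 : 0 < tv uv.2 := lt_of_lt_of_le h0 (hple2 uv.1 uv.2)
      rw [hr]
      show p uv * Real.log (su uv.1 * tv uv.2) = _
      rw [Real.log_mul h1.ne' h2.ne']
      ring
  have hsum1 : ∑ uv : (Fin m → B) × (Fin n → B), p uv * Real.log (su uv.1)
      = ∑ u : Fin m → B, su u * Real.log (su u) := by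
    have haux : ∀ u : Fin m → B, ∑ v : Fin n → B, p (u, v) * Real.log (su u)
        = su u * Real.log (su u) := by
      intro u; rw [← Finset.sum_mul, ← hmarg1 u]
    rw [Fintype.sum_prod_type]
    exact Finset.sum_congr rfl fun u _ => haux u
  have hsum2 : ∑ uv : (Fin m → B) × (Fin n → B), p uv * Real.log (tv uv.2)
      = ∑ v : Fin n → B, tv v * Real.log (tv v) := by
    have haux : ∀ v : Fin n → B, ∑ u : Fin m → B, p (u, v) * Real.log (tv v)
        = tv v * Real.log (tv v) := by
      intro v; rw [← Finset.sum_mul, ← hmarg2 v]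
    rw [Fintype.sum_prod_type_right]
    exact Finset.sum_congr rfl fun v _ => haux v
  -- identify the entropies of the marginals
  have hBEm : blockEntropy ν m = ∑ u : Fin m → B, Real.negMulLog (su u) := by
    unfold blockEntropy
    refine Finset.sum_congr rfl fun u _ => ?_
    rw [hsu, cyl_eq_preimage]
  have hBEn : blockEntropy ν n = ∑ v : Fin n → B, Real.negMulLog (tv v) := by
    unfold blockEntropy
    refine Finset.sum_congr rfl fun v _ => ?_
    rw [htv, cyl_eq_preimage]
  have hnml1 : ∑ u : Fin m → B, Real.negMulLog (su u)
      = -∑ u : Fin m → B, su u * Real.log (su u) := by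
    rw [← Finset.sum_neg_distrib]
    exact Finset.sum_congr rfl fun u _ => by rw [Real.negMulLog, neg_mul]
  have hnml2 : ∑ v : Fin n → B, Real.negMulLog (tv v)
      = -∑ v : Fin n → B, tv v * Real.log (tv v) := by
    rw [← Finset.sum_neg_distrib]
    exact Finset.sum_congr rfl fun v _ => by rw [Real.negMulLog, neg_mul]
  rw [hBE, hBEm, hBEn]
  rw [hsumr, hsump, hlogsplit, hsum1, hsum2] at hg
  rw [hnml1, hnml2]
  linarith


lemma blockEntropy_nonneg {C : Type*} [Fintype C] [MeasurableSpace C]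
    (κ : Measure (ℤ → C)) [IsProbabilityMeasure κ] (k : ℕ) : 0 ≤ blockEntropy κ k :=
  Finset.sum_nonneg fun w _ => Real.negMulLog_nonneg ENNReal.toReal_nonneg
    (le_trans (ENNReal.toReal_mono ENNReal.one_ne_top prob_le_one) (by norm_num))

lemma blockEntropy_zero {C : Type*} [Fintype C] [MeasurableSpace C]
    (κ : Measure (ℤ → C)) [IsProbabilityMeasure κ] : blockEntropy κ 0 = 0 := by
  unfold blockEntropy
  refine Finset.sum_eq_zero fun w _ => ?_
  have h1 : {x : ℤ → C | ∀ i : Fin 0, x (i : ℤ) = w i} = Set.univ := by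
    ext x; simp
  rw [h1, measure_univ, ENNReal.toReal_one, Real.negMulLog_one]

lemma blockEntropy_mul {B : Type*} [Fintype B] [MeasurableSpace B]
    [MeasurableSingletonClass B]
    (ν : Measure (ℤ → B)) [IsProbabilityMeasure ν] (hν : MeasurePreserving shift ν ν)
    (M : ℕ) : ∀ k : ℕ, blockEntropy ν (k * M) ≤ k * blockEntropy ν M := by
  intro k
  induction k with
  | zero => simp [blockEntropy_zero ν]
  | succ k ih =>
    have h1 : (k + 1) * M = k * M + M := by ring
    rw [h1]
    calc blockEntropy ν (k * M + M)
        ≤ blockEntropy ν (k * M) + blockEntropy ν M := blockEntropy_subadd ν hν _ _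
      _ ≤ k * blockEntropy ν M + blockEntropy ν M := by linarith
      _ = (k + 1 : ℕ) * blockEntropy ν M := by push_cast; ring

end Stmt17Aux

open Stmt17Aux

theorem stmt17 {A B : Type*} [Fintype A] [Fintype B]
    [MeasurableSpace A] [MeasurableSingletonClass A]
    [MeasurableSpace B] [MeasurableSingletonClass B]
    (φ : A → B) (X : Set (ℤ → A)) (hXinv : shift '' X = X)
    (μ : Measure (ℤ → A)) [IsProbabilityMeasure μ]
    (hμinv : MeasurePreserving shift μ μ) (hμsupp : μ Xᶜ = 0)
    (ν : Measure (ℤ → B)) (hproj : μ.map (fun x => φ ∘ x) = ν)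
    (hνerg : Ergodic shift ν)
    (c : ℝ)
    (hc : Tendsto (fun n : ℕ => (∫ y, fCount φ X n y ∂ν) / n) atTop (nhds c)) :
    KSEntropy μ ≤ KSEntropy ν + c := by
  classical
  have hφ : Measurable (fun x : ℤ → A => φ ∘ x) :=
    measurable_pi_iff.2 fun i => Measurable.of_discrete.comp (measurable_pi_apply i)
  have hshiftB : Measurable (shift : (ℤ → B) → (ℤ → B)) :=
    measurable_pi_iff.2 fun i => measurable_pi_apply (i + 1)
  have hshiftA : Measurable (shift : (ℤ → A) → (ℤ → A)) :=
    measurable_pi_iff.2 fun i => measurable_pi_apply (i + 1)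
  haveI hνprob : IsProbabilityMeasure ν := by
    rw [← hproj]; exact Measure.isProbabilityMeasure_map hφ.aemeasurable
  have hAne : Nonempty (ℤ → A) := by
    by_contra h
    rw [not_nonempty_iff] at h
    have h1 : (Set.univ : Set (ℤ → A)) = ∅ := Set.univ_eq_empty_iff.2 h
    have h2 := measure_univ (μ := μ)
    rw [h1, measure_empty] at h2
    exact zero_ne_one h2
  haveI : Nonempty B := ⟨φ (Classical.arbitrary (ℤ → A) 0)⟩
  have hνinv : MeasurePreserving shift ν ν := by
    refine ⟨hshiftB, ?_⟩
    rw [← hproj, Measure.map_map hshiftB hφ]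
    have hcomm : ((shift : (ℤ → B) → (ℤ → B)) ∘ fun x : ℤ → A => φ ∘ x)
        = (fun x : ℤ → A => φ ∘ x) ∘ (shift : (ℤ → A) → (ℤ → A)) := rfl
    rw [hcomm, ← Measure.map_map hφ hshiftA, hμinv.map_eq]
  -- main estimate for every ε > 0
  have hmain : ∀ ε : ℝ, 0 < ε → KSEntropy μ ≤ KSEntropy ν + c + ε := by
    intro ε hε
    have hKS : KSEntropy ν = ⨅ n : ℕ, blockEntropy ν (n + 1) / (n + 1) := rfl
    have h1 : ⨅ n : ℕ, blockEntropy ν (n + 1) / (n + 1) < KSEntropy ν + ε / 2 := by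
      rw [← hKS]; linarith
    obtain ⟨m, hm⟩ := exists_lt_of_ciInf_lt h1
    obtain ⟨N₀, hN₀⟩ := (Metric.tendsto_atTop.1 hc) (ε / 2) (by positivity)
    set M : ℕ := m + 1 with hM
    set k : ℕ := max N₀ 1 with hk
    set N : ℕ := k * M with hN
    have hk1 : 1 ≤ k := le_max_right _ _
    have hM1 : 1 ≤ M := Nat.le_add_left _ _
    have hN1 : 1 ≤ N := Nat.one_le_iff_ne_zero.2 (Nat.mul_ne_zero (by omega) (by omega))
    have hNN₀ : N₀ ≤ N :=
      le_trans (le_max_left N₀ 1) (Nat.le_mul_of_pos_right k (by omega))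
    have hNposR : (0 : ℝ) < (N : ℝ) := by exact_mod_cast hN1
    have hMposR : (0 : ℝ) < (M : ℝ) := by exact_mod_cast hM1
    have hkposR : (0 : ℝ) < (k : ℝ) := by exact_mod_cast hk1
    -- step 1 : KSEntropy μ ≤ blockEntropy μ N / N
    obtain ⟨N', hN'⟩ : ∃ N', N = N' + 1 := ⟨N - 1, by omega⟩
    have hstep1 : KSEntropy μ ≤ blockEntropy μ N / N := by
      have hb : BddBelow (Set.range fun n : ℕ => blockEntropy μ (n + 1) / (n + 1)) := by
        refine ⟨0, ?_⟩
        rintro x ⟨n, rfl⟩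
        exact div_nonneg (blockEntropy_nonneg μ (n + 1)) (by positivity)
      have h3 := ciInf_le hb N'
      have h4 : blockEntropy μ (N' + 1) / ((N' : ℝ) + 1) = blockEntropy μ N / (N : ℝ) := by
        rw [hN']; push_cast; ring_nf
      rw [← h4]
      exact h3
    -- step 2 : key inequality
    have hstep2 : blockEntropy μ N ≤ blockEntropy ν N + ∫ y, fCount φ X N y ∂ν :=
      key_ineq φ X μ hμsupp ν hproj N
    -- step 3 : subadditivity
    have hstep3 : blockEntropy ν N ≤ (k : ℝ) * blockEntropy ν M :=
      blockEntropy_mul ν hνinv M k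
    -- step 4 : integral term
    have hstep4 : (∫ y, fCount φ X N y ∂ν) / (N : ℝ) < c + ε / 2 := by
      have h5 := hN₀ N hNN₀
      rw [Real.dist_eq, abs_lt] at h5
      linarith [h5.1, h5.2]
    -- step 5 : block entropy of ν at M
    have hstep5 : blockEntropy ν M / (M : ℝ) < KSEntropy ν + ε / 2 := by
      have : blockEntropy ν (m + 1) / ((m : ℝ) + 1) = blockEntropy ν M / (M : ℝ) := by
        rw [hM]; push_cast; ring_nf
      rw [← this]
      exact hm
    -- combine
    have hNR : (N : ℝ) = (k : ℝ) * (M : ℝ) := by rw [hN]; push_cast; ring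
    have hdiv : ((k : ℝ) * blockEntropy ν M) / (N : ℝ) = blockEntropy ν M / (M : ℝ) := by
      rw [hNR, mul_div_mul_left _ _ hkposR.ne']
    have hchain : blockEntropy μ N / (N : ℝ)
        ≤ blockEntropy ν M / (M : ℝ) + (∫ y, fCount φ X N y ∂ν) / (N : ℝ) := by
      rw [← hdiv]
      have h6 : blockEntropy μ N / (N : ℝ)
          ≤ (blockEntropy ν N + ∫ y, fCount φ X N y ∂ν) / (N : ℝ) := by
        gcongr
      have h7 : (blockEntropy ν N + ∫ y, fCount φ X N y ∂ν) / (N : ℝ)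
          = blockEntropy ν N / (N : ℝ) + (∫ y, fCount φ X N y ∂ν) / (N : ℝ) := by
        ring
      have h8 : blockEntropy ν N / (N : ℝ) ≤ ((k : ℝ) * blockEntropy ν M) / (N : ℝ) := by
        gcongr
      linarith
    calc KSEntropy μ ≤ blockEntropy μ N / (N : ℝ) := hstep1
      _ ≤ blockEntropy ν M / (M : ℝ) + (∫ y, fCount φ X N y ∂ν) / (N : ℝ) := hchain
      _ ≤ KSEntropy ν + ε / 2 + (c + ε / 2) := by linarith
      _ = KSEntropy ν + c + ε := by ring
  by_contra hcon
  push_neg at hcon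
  have := hmain ((KSEntropy μ - (KSEntropy ν + c)) / 2) (by linarith)
  linarith

end
end
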